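/- Let M and N be preorders and f : M → N a monotone map. The following are equivalent: (i) for every subset S ⊆ M there exists an element of N that is a least upper bound of the image f '' S; (ii) the monotone map g : N → LowerSet M defined by g n = {m | f m ≤ n} (which is indeed a lower set) has a left adjoint, i.e. there is a monotone z : LowerSet M → N such that z S ≤ n if and only if S ⊆ g n, for all lower sets S and all n ∈ N; (iii) f is total: for every preorder B and every modular relation J from M to B there exists a monotone l : B → N such that, for every y ∈ B, l y is a least upper bound of f '' {m | J m y}. -/

import Mathlib

universe u v w

/-- A relation `J : A → B → Prop` between preorders is *modular* if
`x₁ ≤ x₂`, `J x₂ y₁` and `y₁ ≤ y₂` imply `J x₁ y₂`. -/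
def Modular {A B : Type*} [Preorder A] [Preorder B] (J : A → B → Prop) : Prop :=
  ∀ ⦃x₁ x₂ : A⦄ ⦃y₁ y₂ : B⦄, x₁ ≤ x₂ → J x₂ y₁ → y₁ ≤ y₂ → J x₁ y₂

private lemma ub_lowerClosure {M : Type u} {N : Type v} [Preorder M] [Preorder N]
    {f : M → N} (hf : Monotone f) (S : Set M) :
    upperBounds (f '' (lowerClosure S : Set M)) = upperBounds (f '' S) := by
  apply Set.Subset.antisymm
  · exact upperBounds_mono_set (Set.image_mono (f := f) (subset_lowerClosure))
  · rintro n hn _ ⟨m, hm, rfl⟩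
    obtain ⟨s, hs, hms⟩ := hm
    exact le_trans (hf hms) (hn ⟨s, hs, rfl⟩)

private lemma isLUB_lowerClosure {M : Type u} {N : Type v} [Preorder M] [Preorder N]
    {f : M → N} (hf : Monotone f) (S : Set M) (n : N) :
    IsLUB (f '' (lowerClosure S : Set M)) n ↔ IsLUB (f '' S) n := by
  unfold IsLUB IsLeast
  rw [ub_lowerClosure hf]

/-- A monotone map `f : M → N` admits least upper bounds of all images `f '' S` iff the
monotone map `g : N → LowerSet M`, `g n = {m | f m ≤ n}`, has a left adjoint, iff `f` is
total (the pointwise left Kan extension of `f` along every modular relation out of `M`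
exists). -/
theorem stmt5 {M : Type u} {N : Type v} [Preorder M] [Preorder N]
    (f : M → N) (hf : Monotone f) :
    ∃ g : N → LowerSet M,
      (∀ n : N, (g n : Set M) = {m | f m ≤ n}) ∧
      Monotone g ∧
      -- (i) ↔ (ii)
      ((∀ S : Set M, ∃ n : N, IsLUB (f '' S) n) ↔
        ∃ z : LowerSet M → N, Monotone z ∧
          ∀ (S : LowerSet M) (n : N), z S ≤ n ↔ (S : Set M) ⊆ (g n : Set M)) ∧
      -- (i) ↔ (iii)
      ((∀ S : Set M, ∃ n : N, IsLUB (f '' S) n) ↔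
        ∀ (B : Type w) [Preorder B] (J : M → B → Prop), Modular J →
          ∃ l : B → N, Monotone l ∧ ∀ y : B, IsLUB (f '' {m | J m y}) (l y)) := by
  refine ⟨fun n => ⟨{m | f m ≤ n}, fun a b hba ha => le_trans (hf hba) ha⟩,
    fun n => rfl, fun n₁ n₂ h m hm => le_trans hm h, ?_, ?_⟩
  · constructor
    · intro h
      choose z hz using fun S : LowerSet M => h (S : Set M)
      have key : ∀ (S : LowerSet M) (n : N),
          z S ≤ n ↔ (S : Set M) ⊆ {m | f m ≤ n} := by
        intro S n
        constructor
        · intro hle m hm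
          exact le_trans ((hz S).1 ⟨m, hm, rfl⟩) hle
        · intro hsub
          exact (hz S).2 (by rintro _ ⟨m, hm, rfl⟩; exact hsub hm)
      refine ⟨z, fun S T hST => (key S (z T)).2 fun m hm =>
        (key T (z T)).1 le_rfl (hST hm), key⟩
    · rintro ⟨z, hzmono, hz⟩ S
      refine ⟨z (lowerClosure S), (isLUB_lowerClosure hf S _).1 ?_⟩
      constructor
      · rintro _ ⟨m, hm, rfl⟩
        exact (hz _ _).1 le_rfl hm
      · intro n hn
        exact (hz _ n).2 fun m hm => hn ⟨m, hm, rfl⟩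
  · constructor
    · intro h B _ J hJ
      choose l hl using fun y : B => h {m | J m y}
      have hmono : Monotone l := by
        intro y₁ y₂ hy
        exact (hl y₁).2 fun n hn => (hl y₂).1
          (by obtain ⟨m, hm, rfl⟩ := hn; exact ⟨m, hJ le_rfl hm hy, rfl⟩)
      exact ⟨l, hmono, hl⟩
    · intro h S
      obtain ⟨l, _, hl⟩ := h PUnit.{w+1} (fun m _ => m ∈ lowerClosure S)
        (fun x₁ x₂ _ _ hx hT _ => (lowerClosure S).lower hx hT)
      refine ⟨l PUnit.unit, (isLUB_lowerClosure hf S _).1 ?_⟩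
      exact hl PUnit.unit
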